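/- Let I be an interval and f, g : I → ℝ be continuous strictly monotone functions with g decreasing. Then f ≺ g (i.e. A^[f] ≤ A^[g] pointwise) if and only if g ∘ f⁻¹ is concave on f(I). -/
import Mathlib


open Filter Set

/-- `m` is the value of the quasi-arithmetic mean `A^[f]` on the tuple `v` from `I`,
i.e. `m ∈ I` and `f m = (f v₁ + ⋯ + f vₙ)/n`. -/
def IsQAM (I : Set ℝ) (f : ℝ → ℝ) {n : ℕ} (v : Fin n → ℝ) (m : ℝ) : Prop :=
  m ∈ I ∧ f m = (∑ i, f (v i)) / n

/-- `A^[f] ≤ A^[g]` pointwise on all (nonempty) finite tuples from `I` (the relation `f ≺ g`). -/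
def QALE (I : Set ℝ) (f g : ℝ → ℝ) : Prop :=
  ∀ (n : ℕ), 0 < n → ∀ (v : Fin n → ℝ), (∀ i, v i ∈ I) →
    ∀ a b : ℝ, IsQAM I f v a → IsQAM I g v b → a ≤ b

/-- `A^[f] = A^[g]` on all (nonempty) finite tuples from `I`. -/
def QAEQ (I : Set ℝ) (f g : ℝ → ℝ) : Prop :=
  ∀ (n : ℕ), 0 < n → ∀ (v : Fin n → ℝ), (∀ i, v i ∈ I) →
    ∀ a b : ℝ, IsQAM I f v a → IsQAM I g v b → a = b


/-- Concavity from rational-weight concavity plus one-sided monotonicity. -/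
lemma concaveOn_of_rat_mono (J : Set ℝ) (hJ : Convex ℝ J) (h : ℝ → ℝ)
    (hmono : MonotoneOn h J ∨ AntitoneOn h J)
    (key : ∀ x ∈ J, ∀ y ∈ J, ∀ q : ℚ, 0 ≤ q → (q : ℝ) ≤ 1 →
      (q : ℝ) * h x + (1 - (q : ℝ)) * h y ≤ h ((q : ℝ) * x + (1 - (q : ℝ)) * y)) :
    ConcaveOn ℝ J h := by
  have hZmem : ∀ x ∈ J, ∀ y ∈ J, ∀ t : ℝ, 0 ≤ t → t ≤ 1 → t * x + (1 - t) * y ∈ J := by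
    intro x hx y hy t ht ht1
    have := hJ hx hy ht (show (0:ℝ) ≤ 1 - t by linarith) (by ring)
    simpa [smul_eq_mul] using this
  -- main claim for x < y
  have claim : ∀ x ∈ J, ∀ y ∈ J, x < y → ∀ t : ℝ, 0 ≤ t → t ≤ 1 →
      t * h x + (1 - t) * h y ≤ h (t * x + (1 - t) * y) := by
    intro x hx y hy hxy t ht ht1
    rcases eq_or_lt_of_le ht with h0 | h0
    · rw [← h0]; simpa using key x hx y hy 0 le_rfl (by norm_num)
    rcases eq_or_lt_of_le ht1 with h1 | h1
    · rw [h1]; simpa using key x hx y hy 1 (by norm_num) (by norm_num)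
    -- 0 < t < 1
    refine le_of_forall_pos_le_add ?_
    intro ε hε
    rcases hmono with hm | hm
    · -- h monotone: pick rational q ∈ (t, min 1 (t + ε/(d+1))) with d = h y - h x ≥ 0
      set d : ℝ := h y - h x with hd
      have hd0 : 0 ≤ d := sub_nonneg.2 (hm hx hy hxy.le)
      have hδ : 0 < ε / (d + 1) := div_pos hε (by linarith)
      obtain ⟨q, hq1, hq2⟩ := exists_rat_btwn (show t < min 1 (t + ε / (d + 1)) by
        simp [lt_min_iff]; constructor <;> linarith)
      have hq0 : (0:ℝ) < q := lt_trans h0 hq1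
      have hqle1 : (q:ℝ) ≤ 1 := le_of_lt (lt_of_lt_of_le hq2 (min_le_left _ _))
      have hkey := key x hx y hy q (by exact_mod_cast hq0.le) hqle1
      have hZq : (q:ℝ) * x + (1 - q) * y ≤ t * x + (1 - t) * y := by nlinarith
      have hmem1 := hZmem x hx y hy q hq0.le hqle1
      have hmem2 := hZmem x hx y hy t ht ht1
      have hh := hm hmem1 hmem2 hZq
      have hqt : (q:ℝ) - t ≤ ε / (d + 1) := by
        have := lt_of_lt_of_le hq2 (min_le_right _ _); linarith
      have : ((q:ℝ) - t) * d ≤ ε := by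
        calc ((q:ℝ) - t) * d ≤ (ε / (d+1)) * d := by nlinarith
          _ ≤ ε := by rw [div_mul_eq_mul_div, div_le_iff₀ (by linarith)]; nlinarith
      nlinarith
    · -- h antitone: pick rational q ∈ (max 0 (t - ε/(d+1)), t) with d = h x - h y ≥ 0
      set d : ℝ := h x - h y with hd
      have hd0 : 0 ≤ d := sub_nonneg.2 (hm hx hy hxy.le)
      have hδ : 0 < ε / (d + 1) := div_pos hε (by linarith)
      obtain ⟨q, hq1, hq2⟩ := exists_rat_btwn (show max 0 (t - ε / (d + 1)) < t by
        simp [max_lt_iff]; constructor <;> linarith)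
      have hq0 : (0:ℝ) ≤ q := le_of_lt (lt_of_le_of_lt (le_max_left _ _) hq1)
      have hqle1 : (q:ℝ) ≤ 1 := le_of_lt (lt_trans hq2 h1)
      have hkey := key x hx y hy q (by exact_mod_cast hq0) hqle1
      have hZq : t * x + (1 - t) * y ≤ (q:ℝ) * x + (1 - q) * y := by nlinarith
      have hmem1 := hZmem x hx y hy q hq0 hqle1
      have hmem2 := hZmem x hx y hy t ht ht1
      have hh := hm hmem2 hmem1 hZq
      have hqt : t - (q:ℝ) ≤ ε / (d + 1) := by
        have := lt_of_le_of_lt (le_max_right 0 (t - ε/(d+1))) hq1; linarith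
      have : (t - (q:ℝ)) * d ≤ ε := by
        calc (t - (q:ℝ)) * d ≤ (ε / (d+1)) * d := by nlinarith
          _ ≤ ε := by rw [div_mul_eq_mul_div, div_le_iff₀ (by linarith)]; nlinarith
      nlinarith
  refine ⟨hJ, ?_⟩
  intro x hx y hy a b ha hb hab
  simp only [smul_eq_mul]
  have hb' : b = 1 - a := by linarith
  rcases lt_trichotomy x y with hlt | heq | hgt
  · have := claim x hx y hy hlt a ha (by linarith)
    rw [hb']; convert this using 2
  · subst heq
    have e1 : a * x + b * x = x := by rw [← add_mul, hab, one_mul]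
    have e2 : a * h x + b * h x = h x := by rw [← add_mul, hab, one_mul]
    rw [e1, e2]
  · have := claim y hy x hx hgt b hb (by linarith)
    have h1b : 1 - b = a := by linarith
    rw [h1b] at this
    rw [show a * x + b * y = b * y + a * x by ring]
    linarith

/-- for continuous strictly monotone `f, g` on an interval `I` with `g`
decreasing, `f ≺ g` iff `g ∘ f⁻¹` is concave on `f(I)`. -/
theorem qale_iff_concaveOn_comp_invFunOn
    (I : Set ℝ) (hI : I.OrdConnected)
    (f g : ℝ → ℝ)
    (hfc : ContinuousOn f I) (hgc : ContinuousOn g I)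
    (hf : StrictMonoOn f I ∨ StrictAntiOn f I)
    (hg : StrictAntiOn g I) :
    QALE I f g ↔ ConcaveOn ℝ (f '' I) (g ∘ Function.invFunOn f I) := by
  classical
  set φ := Function.invFunOn f I with hφdef
  have hinj : InjOn f I := hf.elim (fun h => h.injOn) (fun h => h.injOn)
  have hφmem : ∀ x ∈ f '' I, φ x ∈ I := by
    rintro x ⟨u, hu, rfl⟩; exact Function.invFunOn_mem ⟨u, hu, rfl⟩
  have hφf : ∀ x ∈ f '' I, f (φ x) = x := by
    rintro x ⟨u, hu, rfl⟩; exact Function.invFunOn_eq ⟨u, hu, rfl⟩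
  have hfφ : ∀ u ∈ I, φ (f u) = u := fun u hu => hinj.leftInvOn_invFunOn hu
  have hJconv : Convex ℝ (f '' I) := by
    rw [convex_iff_ordConnected]
    exact (hI.isPreconnected.image f hfc).ordConnected
  have hGconv : Convex ℝ (g '' I) := by
    rw [convex_iff_ordConnected]
    exact (hI.isPreconnected.image g hgc).ordConnected
  have hgant : AntitoneOn g I := hg.antitoneOn
  constructor
  · intro hQ
    -- monotonicity of g ∘ φ on f '' I
    have hmono : MonotoneOn (g ∘ φ) (f '' I) ∨ AntitoneOn (g ∘ φ) (f '' I) := by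
      rcases hf with hfm | hfa
      · right; intro x hx y hy hxy
        have hle : φ x ≤ φ y := by
          by_contra hc; push_neg at hc
          have h2 := hfm (hφmem y hy) (hφmem x hx) hc
          rw [hφf x hx, hφf y hy] at h2
          exact absurd h2 (not_lt.2 hxy)
        exact hgant (hφmem x hx) (hφmem y hy) hle
      · left; intro x hx y hy hxy
        have hle : φ y ≤ φ x := by
          by_contra hc; push_neg at hc
          have h2 := hfa (hφmem x hx) (hφmem y hy) hc
          rw [hφf x hx, hφf y hy] at h2
          exact absurd h2 (not_lt.2 hxy)
        exact hgant (hφmem y hy) (hφmem x hx) hle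
    apply concaveOn_of_rat_mono _ hJconv _ hmono
    -- key rational inequality
    have keyN : ∀ p m : ℕ, 0 < p + m → ∀ x ∈ f '' I, ∀ y ∈ f '' I,
        ((p : ℝ) * g (φ x) + (m : ℝ) * g (φ y)) / ((p : ℝ) + (m : ℝ)) ≤
          g (φ (((p : ℝ) * x + (m : ℝ) * y) / ((p : ℝ) + (m : ℝ)))) := by
      intro p m hpm x hx y hy
      have hN : (0:ℝ) < (p : ℝ) + (m : ℝ) := by exact_mod_cast hpm
      obtain ⟨u, hu, hfu⟩ := hx
      obtain ⟨w, hw, hfw⟩ := hy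
      have hφx : φ x = u := by rw [← hfu]; exact hfφ u hu
      have hφy : φ y = w := by rw [← hfw]; exact hfφ w hw
      set v : Fin (p + m) → ℝ := Fin.append (fun _ => u) (fun _ => w) with hv_def
      have hv : ∀ i, v i ∈ I := by
        intro i
        refine Fin.addCases (fun j => ?_) (fun j => ?_) i
        · rw [hv_def, Fin.append_left]; exact hu
        · rw [hv_def, Fin.append_right]; exact hw
      have hsf : ∑ i, f (v i) = (p : ℝ) * x + (m : ℝ) * y := by
        rw [Fin.sum_univ_add]
        simp only [hv_def, Fin.append_left, Fin.append_right, hfu, hfw, Finset.sum_const,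
          Finset.card_univ, Fintype.card_fin, nsmul_eq_mul]
      have hsg : ∑ i, g (v i) = (p : ℝ) * g u + (m : ℝ) * g w := by
        rw [Fin.sum_univ_add]
        simp only [hv_def, Fin.append_left, Fin.append_right, Finset.sum_const,
          Finset.card_univ, Fintype.card_fin, nsmul_eq_mul]
      -- the f-mean exists
      have hmemf : ((p : ℝ) * x + (m : ℝ) * y) / ((p : ℝ) + (m : ℝ)) ∈ f '' I := by
        have h1 : (0:ℝ) ≤ (p : ℝ) / ((p : ℝ) + (m : ℝ)) := by positivity
        have h2 : (0:ℝ) ≤ (m : ℝ) / ((p : ℝ) + (m : ℝ)) := by positivity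
        have h3 : (p : ℝ) / ((p : ℝ) + (m : ℝ)) + (m : ℝ) / ((p : ℝ) + (m : ℝ)) = 1 := by
          field_simp
        have e : ((p : ℝ) * x + (m : ℝ) * y) / ((p : ℝ) + (m : ℝ)) =
            ((p : ℝ) / ((p : ℝ) + (m : ℝ))) • x + ((m : ℝ) / ((p : ℝ) + (m : ℝ))) • y := by
          simp only [smul_eq_mul]; field_simp
        rw [e]
        exact hJconv ⟨u, hu, hfu⟩ ⟨w, hw, hfw⟩ h1 h2 h3
      have hmemg : ((p : ℝ) * g u + (m : ℝ) * g w) / ((p : ℝ) + (m : ℝ)) ∈ g '' I := by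
        have h1 : (0:ℝ) ≤ (p : ℝ) / ((p : ℝ) + (m : ℝ)) := by positivity
        have h2 : (0:ℝ) ≤ (m : ℝ) / ((p : ℝ) + (m : ℝ)) := by positivity
        have h3 : (p : ℝ) / ((p : ℝ) + (m : ℝ)) + (m : ℝ) / ((p : ℝ) + (m : ℝ)) = 1 := by
          field_simp
        have e : ((p : ℝ) * g u + (m : ℝ) * g w) / ((p : ℝ) + (m : ℝ)) =
            ((p : ℝ) / ((p : ℝ) + (m : ℝ))) • g u + ((m : ℝ) / ((p : ℝ) + (m : ℝ))) • g w := by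
          simp only [smul_eq_mul]; field_simp
        rw [e]
        exact hGconv ⟨u, hu, rfl⟩ ⟨w, hw, rfl⟩ h1 h2 h3
      set A := ((p : ℝ) * x + (m : ℝ) * y) / ((p : ℝ) + (m : ℝ)) with hA
      set B := ((p : ℝ) * g u + (m : ℝ) * g w) / ((p : ℝ) + (m : ℝ)) with hB
      set b0 := Function.invFunOn g I B with hb0
      have hb0I : b0 ∈ I := by
        obtain ⟨z, hz, hgz⟩ := hmemg
        exact Function.invFunOn_mem ⟨z, hz, hgz⟩
      have hgb0 : g b0 = B := by
        obtain ⟨z, hz, hgz⟩ := hmemg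
        exact Function.invFunOn_eq ⟨z, hz, hgz⟩
      have ha0I : φ A ∈ I := hφmem A hmemf
      have hfa0 : f (φ A) = A := hφf A hmemf
      have hcast : ((p + m : ℕ) : ℝ) = (p : ℝ) + (m : ℝ) := by push_cast; ring
      have hqam_f : IsQAM I f v (φ A) := by
        refine ⟨ha0I, ?_⟩
        rw [hfa0, hsf, hcast]
      have hqam_g : IsQAM I g v b0 := by
        refine ⟨hb0I, ?_⟩
        rw [hgb0, hsg, hcast]
      have hab := hQ (p + m) hpm v hv (φ A) b0 hqam_f hqam_g
      have := hgant ha0I hb0I hab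
      rw [hgb0] at this
      rw [hφx, hφy]
      exact this
    intro x hx y hy q hq0 hq1
    have hnum : 0 ≤ q.num := Rat.num_nonneg.2 hq0
    set p : ℕ := q.num.toNat with hp
    set n : ℕ := q.den with hn
    have hn0 : 0 < n := q.pos
    have hqr : (q : ℝ) = (p : ℝ) / (n : ℝ) := by
      have h1 : ((p : ℕ) : ℝ) = (q.num : ℝ) := by
        rw [hp]; exact_mod_cast Int.toNat_of_nonneg hnum
      rw [Rat.cast_def, h1, hn]
    have hnR : (0:ℝ) < (n : ℝ) := by exact_mod_cast hn0
    have hpn : p ≤ n := by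
      have : (p : ℝ) ≤ (n : ℝ) := by
        rw [hqr] at hq1
        exact (div_le_one hnR).1 hq1
      exact_mod_cast this
    set m : ℕ := n - p with hm
    have hmn : p + m = n := Nat.add_sub_cancel' hpn
    have hPM : (p : ℝ) + (m : ℝ) = (n : ℝ) := by exact_mod_cast congrArg (Nat.cast (R := ℝ)) hmn
    have H := keyN p m (by omega) x hx y hy
    rw [hPM] at H
    have hmr : (m : ℝ) = (n : ℝ) - (p : ℝ) := by linarith
    have e1 : ((p : ℝ) * g (φ x) + (m : ℝ) * g (φ y)) / (n : ℝ) =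
        (q : ℝ) * (g ∘ φ) x + (1 - (q : ℝ)) * (g ∘ φ) y := by
      rw [hqr, hmr]; simp only [Function.comp]; field_simp
    have e2 : ((p : ℝ) * x + (m : ℝ) * y) / (n : ℝ) = (q : ℝ) * x + (1 - (q : ℝ)) * y := by
      rw [hqr, hmr]; field_simp
    rw [← e1, ← e2]
    exact H
  · rintro hcon n hn v hv a b ⟨haI, hfa⟩ ⟨hbI, hgb⟩
    have hnR : (0:ℝ) < (n : ℝ) := by exact_mod_cast hn
    have jensen := hcon.le_map_sum (t := Finset.univ) (w := fun _ : Fin n => (n : ℝ)⁻¹)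
      (p := fun i => f (v i)) (fun i _ => by positivity)
      (by simp [Finset.sum_const, Finset.card_univ, nsmul_eq_mul]; field_simp)
      (fun i _ => mem_image_of_mem f (hv i))
    have hterm : ∀ i : Fin n, g (φ (f (v i))) = g (v i) := fun i => by rw [hfφ (v i) (hv i)]
    have eL : ∑ i : Fin n, (n : ℝ)⁻¹ • (g ∘ φ) (f (v i)) = g b := by
      simp only [smul_eq_mul, Function.comp_apply, hterm]
      rw [← Finset.mul_sum, ← div_eq_inv_mul, hgb]
    have eR : (∑ i : Fin n, (n : ℝ)⁻¹ • f (v i)) = f a := by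
      simp only [smul_eq_mul]
      rw [← Finset.mul_sum, ← div_eq_inv_mul, hfa]
    rw [eL, eR] at jensen
    have : (g ∘ φ) (f a) = g a := by rw [Function.comp_apply, hfφ a haI]
    rw [this] at jensen
    by_contra hc
    push_neg at hc
    exact absurd jensen (not_le.2 (hg hbI haI hc))
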